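/- Let 1 ≤ r ≤ n and b = (b_1,...,b_r) be positive integers with b_1+...+b_r = n. Then the multinomial coefficient n!/(b_1!···b_r!) times the sum over k from r to n and over all compositions (a_1,...,a_k) of n into k positive parts of (-1)^{n-k} (n-k)! / (n! · n^{n-k} · a_1···a_k) · C(n-r,k-r) · a_1^{b_1}···a_r^{b_r} equals 1 if n = r and 0 otherwise. -/

import Mathlib

open Finset PowerSeries

noncomputable def Phi (c : ℕ) : PowerSeries ℝ :=
  PowerSeries.mk fun m => if m = 0 then 0 else (m:ℝ)^c / m

@[simp] lemma coeff_Phi (c m : ℕ) :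
    PowerSeries.coeff m (Phi c) = if m = 0 then 0 else (m:ℝ)^c / m :=
  PowerSeries.coeff_mk _ _

lemma constantCoeff_Phi (c : ℕ) : PowerSeries.constantCoeff (Phi c) = 0 := by
  rw [← PowerSeries.coeff_zero_eq_constantCoeff]; simp

lemma X_dvd_Phi (c : ℕ) : (PowerSeries.X : ℝ⟦X⟧) ∣ Phi c :=
  PowerSeries.X_dvd_iff.mpr (constantCoeff_Phi c)

lemma coeff_X_mul_D (f : ℝ⟦X⟧) (t : ℕ) :
    PowerSeries.coeff t (PowerSeries.X * d⁄dX ℝ f) = t * PowerSeries.coeff t f := by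
  cases t with
  | zero => simp [PowerSeries.coeff_zero_eq_constantCoeff]
  | succ s =>
      rw [PowerSeries.coeff_succ_X_mul, PowerSeries.coeff_derivative]
      push_cast; ring

lemma coeff_one_sub_X_mul_D (f : ℝ⟦X⟧) (t : ℕ) :
    PowerSeries.coeff t ((1 - PowerSeries.X) * d⁄dX ℝ f)
      = (t+1) * PowerSeries.coeff (t+1) f - t * PowerSeries.coeff t f := by
  rw [sub_mul, one_mul, map_sub, coeff_X_mul_D, PowerSeries.coeff_derivative]
  push_cast; ring

lemma Phi_succ (c : ℕ) : Phi (c+1) = PowerSeries.X * d⁄dX ℝ (Phi c) := by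
  ext t
  rw [coeff_X_mul_D, coeff_Phi, coeff_Phi]
  cases t with
  | zero => simp
  | succ s =>
      have h : ((s:ℝ)+1) ≠ 0 := by positivity
      simp only [Nat.succ_ne_zero, if_false]
      push_cast
      field_simp
      ring

noncomputable def Eul : ℕ → Polynomial ℝ
  | 0 => Polynomial.X
  | (b+1) => Polynomial.X * (1 - Polynomial.X) * (Polynomial.derivative (Eul b))
      + ((b:ℝ)+1) • (Polynomial.X * Eul b)

lemma Eul_spec : ∀ b : ℕ, ((1:ℝ⟦X⟧) - PowerSeries.X)^(b+1) * Phi (b+1) = (Eul b : ℝ⟦X⟧) := by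
  intro b
  induction b with
  | zero =>
      rw [pow_one, Eul]
      ext t
      rw [sub_mul, one_mul, map_sub]
      rcases t with _ | _ | s
      · simp
      · simp [PowerSeries.coeff_succ_X_mul, Polynomial.coeff_coe]
      · rw [PowerSeries.coeff_succ_X_mul]
        simp only [coeff_Phi, Polynomial.coeff_coe, Polynomial.coeff_X]
        norm_num
        have h1 : ((s:ℝ)+1+1) ≠ 0 := by positivity
        have h2 : ((s:ℝ)+1) ≠ 0 := by positivity
        push_cast
        rw [div_self h1, div_self h2]
        · ring
  | succ b ih =>
      have hD := congrArg (d⁄dX ℝ) ih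
      rw [Derivation.leibniz, Derivation.leibniz_pow, map_sub, Derivation.map_one_eq_zero,
        PowerSeries.derivative_X, PowerSeries.derivative_coe] at hD
      -- hD : (1-X)^(b+1) • d⁄dX (Phi (b+1)) + Phi (b+1) • ((b+1) • (1-X)^b * (0 - 1)) = ↑(derivative (Eul b))
      simp only [smul_eq_mul, nsmul_eq_mul] at hD
      show ((1:ℝ⟦X⟧) - PowerSeries.X)^(b+2) * Phi (b+1+1) = _
      rw [Phi_succ, Eul]
      rw [Polynomial.smul_eq_C_mul]
      push_cast [Polynomial.coe_add, Polynomial.coe_mul, Polynomial.coe_X,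
        Polynomial.coe_sub, Polynomial.coe_one, Polynomial.coe_C, Nat.add_sub_cancel] at hD ⊢
      rw [PowerSeries.C_eq_algebraMap, map_add, map_natCast, map_one]
      linear_combination (PowerSeries.X * (1 - PowerSeries.X)) * hD
        + (((b:ℝ⟦X⟧)+1) * PowerSeries.X) * ih

lemma Eul_coeff_zero : ∀ b N : ℕ, b + 1 < N → (Eul b).coeff N = 0 := by
  intro b
  induction b with
  | zero =>
      intro N hN
      rw [Eul, Polynomial.coeff_X]
      simp only [ite_eq_right_iff]
      omega
  | succ b ih =>
      intro N hN
      obtain ⟨s, rfl⟩ : ∃ s, N = s + 2 := ⟨N - 2, by omega⟩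
      rw [Eul]
      have h1 : Polynomial.X * (1 - Polynomial.X) * Polynomial.derivative (Eul b)
          = Polynomial.X * Polynomial.derivative (Eul b)
            - Polynomial.X^2 * Polynomial.derivative (Eul b) := by ring
      rw [h1, Polynomial.coeff_add, Polynomial.coeff_sub, Polynomial.coeff_smul]
      have e1 : (Polynomial.X * Polynomial.derivative (Eul b)).coeff (s+2)
          = (Polynomial.derivative (Eul b)).coeff (s+1) := Polynomial.coeff_X_mul _ (s+1)
      have e2 : (Polynomial.X^2 * Polynomial.derivative (Eul b)).coeff (s+2)
          = (Polynomial.derivative (Eul b)).coeff s := by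
        rw [Polynomial.coeff_X_pow_mul]
      have e3 : (Polynomial.X * Eul b).coeff (s+2) = (Eul b).coeff (s+1) :=
        Polynomial.coeff_X_mul _ (s+1)
      rw [e1, e2, e3, Polynomial.coeff_derivative, Polynomial.coeff_derivative,
        ih _ (by omega), ih _ (by omega)]
      simp

lemma Eul_coeff_top (b : ℕ) : (Eul (b+1)).coeff (b+2) = 0 := by
  rw [Eul]
  have h1 : Polynomial.X * (1 - Polynomial.X) * Polynomial.derivative (Eul b)
      = Polynomial.X * Polynomial.derivative (Eul b)
        - Polynomial.X^2 * Polynomial.derivative (Eul b) := by ring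
  rw [h1, Polynomial.coeff_add, Polynomial.coeff_sub, Polynomial.coeff_smul]
  have e1 : (Polynomial.X * Polynomial.derivative (Eul b)).coeff (b+2)
      = (Polynomial.derivative (Eul b)).coeff (b+1) := Polynomial.coeff_X_mul _ (b+1)
  have e2 : (Polynomial.X^2 * Polynomial.derivative (Eul b)).coeff (b+2)
      = (Polynomial.derivative (Eul b)).coeff b := by rw [Polynomial.coeff_X_pow_mul]
  have e3 : (Polynomial.X * Eul b).coeff (b+2) = (Eul b).coeff (b+1) :=
    Polynomial.coeff_X_mul _ (b+1)
  rw [e1, e2, e3, Polynomial.coeff_derivative, Polynomial.coeff_derivative,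
    Eul_coeff_zero _ _ (by omega)]
  simp only [smul_eq_mul]
  push_cast
  ring

lemma Eul_natDegree (b : ℕ) : (Eul b).natDegree ≤ b + 1 := by
  apply Polynomial.natDegree_le_iff_coeff_eq_zero.mpr
  intro N hN
  exact Eul_coeff_zero b N hN

lemma Eul_natDegree' (b : ℕ) : (Eul (b+1)).natDegree ≤ b + 1 := by
  apply Polynomial.natDegree_le_iff_coeff_eq_zero.mpr
  intro N hN
  rcases Nat.lt_or_ge (b+2) N with h | h
  · exact Eul_coeff_zero _ _ h
  · have : N = b + 2 := by omega
    rw [this]; exact Eul_coeff_top b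

lemma Eul_zero : Eul 0 = Polynomial.X := rfl

/-- Compositions of `m` into `k` positive parts. -/
def posCompositions (k m : ℕ) : Finset (Fin k → ℕ) :=
  (Finset.Nat.antidiagonalTuple k m).filter fun a => ∀ i, 0 < a i

lemma mem_posCompositions {k m : ℕ} {a : Fin k → ℕ} :
    a ∈ posCompositions k m ↔ (∑ i, a i = m) ∧ ∀ i, 0 < a i := by
  rw [posCompositions, Finset.mem_filter, Finset.Nat.mem_antidiagonalTuple]

lemma sum_posComp (k m : ℕ) (φ : Fin k → ℝ⟦X⟧)
    (h : ∀ i, PowerSeries.constantCoeff (φ i) = 0) :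
    ∑ a ∈ posCompositions k m, ∏ i, PowerSeries.coeff (a i) (φ i)
      = PowerSeries.coeff m (∏ i, φ i) := by
  rw [PowerSeries.coeff_prod]
  rw [← Finset.sum_filter_of_ne (p := fun l : Fin k →₀ ℕ => ∀ i, 0 < l i)
    (by
      intro l _ hl i
      rcases Nat.eq_zero_or_pos (l i) with h0 | h0
      · exfalso
        apply hl
        apply Finset.prod_eq_zero (Finset.mem_univ i)
        rw [h0, PowerSeries.coeff_zero_eq_constantCoeff, h i]
      · exact h0)]
  symm
  apply Finset.sum_nbij' (i := fun (l : Fin k →₀ ℕ) => ⇑l)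
    (j := fun a => Finsupp.equivFunOnFinite.symm a)
  · intro l hl
    simp only [Finset.mem_filter, Finset.mem_finsuppAntidiag] at hl
    rw [mem_posCompositions]
    exact ⟨hl.1.1, hl.2⟩
  · intro a ha
    rw [mem_posCompositions] at ha
    simp only [Finset.mem_filter, Finset.mem_finsuppAntidiag]
    refine ⟨⟨?_, Finset.subset_univ _⟩, ?_⟩
    · simpa using ha.1
    · simpa using ha.2
  · intro l _
    exact Finsupp.equivFunOnFinite_symm_coe l
  · intro a _
    exact Finsupp.equivFunOnFinite.apply_symm_apply a
  · intro l _
    rfl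

lemma coeff_Phi_pow_eq_zero {c t j : ℕ} (ht : t < j) :
    PowerSeries.coeff t ((Phi c)^j) = 0 := by
  have : (PowerSeries.X : ℝ⟦X⟧)^j ∣ (Phi c)^j := pow_dvd_pow_of_dvd (X_dvd_Phi c) j
  exact (PowerSeries.X_pow_dvd_iff.mp this) t ht

lemma one_sub_X_mul_D_L : ((1:ℝ⟦X⟧) - PowerSeries.X) * d⁄dX ℝ (Phi 0) = 1 := by
  ext t
  rw [coeff_one_sub_X_mul_D]
  cases t with
  | zero => simp
  | succ s =>
      simp only [coeff_Phi, Nat.succ_ne_zero, if_false, PowerSeries.coeff_one]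
      have h1 : ((s:ℝ)+1) ≠ 0 := by positivity
      have h2 : ((s:ℝ)+1+1) ≠ 0 := by positivity
      push_cast
      rw [pow_zero, pow_zero]
      field_simp
      norm_num

lemma trunc_exp (n m : ℕ) (hn : 1 ≤ n) :
    ∀ t, t ≤ m → PowerSeries.coeff t
      ((1 - PowerSeries.X)^n
        - ∑ j ∈ Finset.range (m+1),
            PowerSeries.C ((-(n:ℝ))^j / (j.factorial : ℝ)) * (Phi 0)^j) = 0 := by
  set L : ℝ⟦X⟧ := Phi 0 with hL
  set c : ℕ → ℝ := fun j => (-(n:ℝ))^j / (j.factorial : ℝ) with hc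
  set u : ℝ⟦X⟧ := (1 - PowerSeries.X)^n with hu
  set v : ℝ⟦X⟧ := ∑ j ∈ Finset.range (m+1), PowerSeries.C (c j) * L^j with hv
  have hDu : (1 - PowerSeries.X) * d⁄dX ℝ u = PowerSeries.C (-(n:ℝ)) * u := by
    rw [hu, Derivation.leibniz_pow, map_sub, Derivation.map_one_eq_zero,
      PowerSeries.derivative_X]
    have hnn : n - 1 + 1 = n := by omega
    rw [map_neg, map_natCast, smul_eq_mul, nsmul_eq_mul]
    calc (1 - PowerSeries.X) * ((n:ℝ⟦X⟧) * ((1 - PowerSeries.X)^(n-1) * (0 - 1)))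
        = -(n:ℝ⟦X⟧) * ((1 - PowerSeries.X)^(n-1) * (1 - PowerSeries.X)) := by ring
      _ = -(n:ℝ⟦X⟧) * (1 - PowerSeries.X)^n := by rw [← pow_succ, hnn]
  have hDv : (1 - PowerSeries.X) * d⁄dX ℝ v
      = PowerSeries.C (-(n:ℝ)) * v
        + PowerSeries.C (n:ℝ) * (PowerSeries.C (c m) * L^m) := by
    rw [hv, map_sum, Finset.mul_sum]
    have hterm : ∀ j : ℕ, (1 - PowerSeries.X) * d⁄dX ℝ (PowerSeries.C (c j) * L^j)
        = PowerSeries.C (c j * j) * L^(j-1) := by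
      intro j
      rw [Derivation.leibniz, Derivation.leibniz_pow, PowerSeries.derivative_C]
      simp only [smul_eq_mul, mul_zero, add_zero, nsmul_eq_mul]
      calc (1 - PowerSeries.X) * (PowerSeries.C (c j) * ((j:ℝ⟦X⟧) * (L^(j-1) * d⁄dX ℝ L)))
          = PowerSeries.C (c j) * (j:ℝ⟦X⟧) * L^(j-1)
              * ((1 - PowerSeries.X) * d⁄dX ℝ L) := by ring
        _ = PowerSeries.C (c j * j) * L^(j-1) := by
            rw [hL, one_sub_X_mul_D_L, map_mul, map_natCast]
            ring
    calc ∑ j ∈ Finset.range (m+1), (1 - PowerSeries.X) * d⁄dX ℝ (PowerSeries.C (c j) * L^j)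
        = ∑ j ∈ Finset.range (m+1), PowerSeries.C (c j * j) * L^(j-1) :=
          Finset.sum_congr rfl fun j _ => hterm j
      _ = ∑ j ∈ Finset.range m, PowerSeries.C (c (j+1) * (j+1)) * L^j := by
          rw [Finset.sum_range_succ']
          simp
      _ = ∑ j ∈ Finset.range m, PowerSeries.C (-(n:ℝ)) * (PowerSeries.C (c j) * L^j) := by
          refine Finset.sum_congr rfl fun j _ => ?_
          have hcj : c (j+1) * ((j:ℝ)+1) = -(n:ℝ) * c j := by
            rw [hc]
            simp only [Nat.factorial_succ, pow_succ]
            push_cast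
            have h1 : ((j:ℝ)+1) ≠ 0 := by positivity
            have h2 : ((j.factorial : ℝ)) ≠ 0 := by positivity
            field_simp
          push_cast
          rw [hcj, map_mul]
          ring
      _ = PowerSeries.C (-(n:ℝ)) * v
            + PowerSeries.C (n:ℝ) * (PowerSeries.C (c m) * L^m) := by
          rw [hv, Finset.sum_range_succ, ← Finset.mul_sum]
          rw [map_neg]
          ring
  intro t
  induction t with
  | zero =>
      intro _
      rw [map_sub]
      have hcu : PowerSeries.coeff 0 u = 1 := by
        rw [hu, PowerSeries.coeff_zero_eq_constantCoeff, map_pow]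
        simp
      have hcv : PowerSeries.coeff 0 v = 1 := by
        rw [hv, map_sum]
        rw [Finset.sum_eq_single 0]
        · simp [hc]
        · intro j _ hj
          obtain ⟨s, rfl⟩ : ∃ s, j = s + 1 := ⟨j - 1, by omega⟩
          rw [PowerSeries.coeff_zero_eq_constantCoeff, map_mul, map_pow]
          simp [hL, constantCoeff_Phi]
        · intro h; exact absurd (Finset.mem_range.mpr (by omega)) h
      rw [hcu, hcv, sub_self]
  | succ s ih =>
      intro hs
      have ihs := ih (by omega)
      have hODE : (1 - PowerSeries.X) * d⁄dX ℝ (u - v)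
          = PowerSeries.C (-(n:ℝ)) * (u - v)
            - PowerSeries.C (n:ℝ) * (PowerSeries.C (c m) * L^m) := by
        rw [map_sub, mul_sub, hDu, hDv]
        ring
      have hcoeff := congrArg (PowerSeries.coeff s) hODE
      rw [coeff_one_sub_X_mul_D] at hcoeff
      simp only [map_sub, PowerSeries.coeff_C_mul] at hcoeff
      rw [hL, coeff_Phi_pow_eq_zero (show (s:ℕ) < m by omega)] at hcoeff
      rw [map_sub] at ihs
      have : ((s:ℝ)+1) * PowerSeries.coeff (s+1) (u - v) = 0 := by
        rw [ihs] at hcoeff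
        rw [map_sub]
        linarith [hcoeff]
      have hne : ((s:ℝ)+1) ≠ 0 := by positivity
      exact (mul_eq_zero.mp this).resolve_left hne

/-- exponent pattern -/
def expo (r : ℕ) (b : Fin r → ℕ) (j : ℕ) : Fin (r + j) → ℕ :=
  fun i => if h : (i:ℕ) < r then b ⟨i, h⟩ else 0

lemma expo_castAdd (r : ℕ) (b : Fin r → ℕ) (j : ℕ) (i : Fin r) :
    expo r b j (Fin.castAdd j i) = b i := by
  have h : ((Fin.castAdd j i : Fin (r+j)) : ℕ) < r := by simp [i.isLt]
  rw [expo, dif_pos h]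
  exact congrArg b (Fin.ext (by simp))

lemma expo_natAdd (r : ℕ) (b : Fin r → ℕ) (j : ℕ) (i : Fin j) :
    expo r b j (Fin.natAdd r i) = 0 := by
  rw [expo, dif_neg]
  simp

lemma prod_Phi_expo (r : ℕ) (b : Fin r → ℕ) (j : ℕ) :
    (∏ i : Fin (r+j), Phi (expo r b j i))
      = (∏ i : Fin r, Phi (b i)) * (Phi 0)^j := by
  rw [Fin.prod_univ_add]
  congr 1
  · exact Finset.prod_congr rfl fun i _ => by rw [expo_castAdd]
  · calc (∏ i : Fin j, Phi (expo r b j (Fin.natAdd r i)))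
        = ∏ _i : Fin j, Phi 0 := Finset.prod_congr rfl fun i _ => by rw [expo_natAdd]
      _ = (Phi 0)^j := by
          rw [Finset.prod_const, Finset.card_univ, Fintype.card_fin]

lemma prod_pow_expo (r : ℕ) (b : Fin r → ℕ) (j : ℕ) (h : r ≤ r + j) (a : Fin (r+j) → ℕ) :
    (∏ i : Fin (r+j), ((a i : ℝ))^(expo r b j i))
      = ∏ jj : Fin r, ((a (Fin.castLE h jj) : ℝ))^(b jj) := by
  rw [Fin.prod_univ_add]
  have h2 : (∏ i : Fin j, ((a (Fin.natAdd r i) : ℝ))^(expo r b j (Fin.natAdd r i))) = 1 := by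
    apply Finset.prod_eq_one
    intro i _
    rw [expo_natAdd, pow_zero]
  rw [h2, mul_one]
  apply Finset.prod_congr rfl
  intro i _
  rw [expo_castAdd]
  exact congrArg (fun t : ℕ => (t:ℝ)^(b i)) (congrArg a (Fin.ext (by simp)))

lemma inner_sum_eq (n r : ℕ) (b : Fin r → ℕ) (j : ℕ) (h : r ≤ r + j) :
    (∑ a ∈ posCompositions (r+j) n,
        (-1 : ℝ) ^ (n - (r+j)) * (((n - (r+j)).factorial : ℝ)) /
            ((n.factorial : ℝ) * (n : ℝ) ^ (n - (r+j)) * ∏ i, (a i : ℝ)) *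
          (((n - r).choose ((r+j) - r) : ℝ)) *
          ∏ jj : Fin r, (a (Fin.castLE h jj) : ℝ) ^ (b jj))
    = ((-1 : ℝ) ^ (n - (r+j)) * (((n - (r+j)).factorial : ℝ)) * (((n - r).choose j : ℝ))
        / ((n.factorial : ℝ) * (n : ℝ) ^ (n - (r+j))))
      * PowerSeries.coeff n ((∏ i : Fin r, Phi (b i)) * (Phi 0)^j) := by
  rw [← prod_Phi_expo, ← sum_posComp _ _ _ (fun i => constantCoeff_Phi _), Finset.mul_sum]
  apply Finset.sum_congr rfl
  intro a ha
  rw [mem_posCompositions] at ha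
  have hpos : ∀ i, (0:ℝ) < (a i : ℝ) := fun i => by exact_mod_cast ha.2 i
  have hP : (∏ i, (a i : ℝ)) ≠ 0 := by
    apply ne_of_gt
    exact Finset.prod_pos fun i _ => hpos i
  have hcoeffs : (∏ i, PowerSeries.coeff (a i) (Phi (expo r b j i)))
      = (∏ jj : Fin r, ((a (Fin.castLE h jj) : ℝ))^(b jj)) / (∏ i, (a i : ℝ)) := by
    rw [← prod_pow_expo r b j h a, ← Finset.prod_div_distrib]
    apply Finset.prod_congr rfl
    intro i _
    rw [coeff_Phi, if_neg (ha.2 i).ne']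
  rw [hcoeffs]
  have hrj : (r+j) - r = j := by omega
  rw [hrj]
  have hnf : (n.factorial : ℝ) ≠ 0 := by positivity
  have hden : (n.factorial : ℝ) * (n:ℝ)^(n-(r+j)) * ∏ i, (a i : ℝ) ≠ 0 := by
    rcases Nat.eq_zero_or_pos n with rfl | hn
    · simp only [Nat.zero_sub, pow_zero]
      simpa using hP
    · have : (n:ℝ) > 0 := by exact_mod_cast hn
      positivity
  field_simp
  try ring

lemma coef_identity (n m j : ℕ) (hn : 1 ≤ n) (hj : j ≤ m) :
    (-1:ℝ)^(m-j) * (((m-j).factorial : ℝ)) * ((m.choose j : ℝ))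
        / ((n.factorial:ℝ) * (n:ℝ)^(m-j))
    = ((m.factorial:ℝ) * (-1/(n:ℝ))^m / (n.factorial:ℝ)) * ((-(n:ℝ))^j / (j.factorial:ℝ)) := by
  obtain ⟨d, rfl⟩ : ∃ d, m = j + d := ⟨m - j, by omega⟩
  have hd : j + d - j = d := by omega
  rw [hd]
  have hch0 := Nat.choose_mul_factorial_mul_factorial (Nat.le_add_right j d)
  rw [hd] at hch0
  have hch : ((j+d).choose j : ℝ) * (j.factorial:ℝ) * (d.factorial:ℝ) = ((j+d).factorial:ℝ) := by
    exact_mod_cast congrArg (Nat.cast : ℕ → ℝ) hch0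
  have hnn : (n:ℝ) ≠ 0 := by positivity
  have h2' : (-1:ℝ)^j * (-(n:ℝ))^j = (n:ℝ)^j := by
    rw [← mul_pow]; norm_num
  rw [pow_add, ← hch]
  have hjf : (j.factorial:ℝ) ≠ 0 := by positivity
  have hdf : (d.factorial:ℝ) ≠ 0 := by positivity
  have hnf : (n.factorial:ℝ) ≠ 0 := by positivity
  have hnd : (n:ℝ)^d ≠ 0 := by positivity
  have h4 : (-1:ℝ)^(j*2) = 1 := by
    rw [mul_comm, pow_mul]; norm_num
  rw [show (-1/(n:ℝ)) = (-(n:ℝ))⁻¹ by rw [neg_div, inv_neg, one_div], inv_pow, inv_pow]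
  have hnj : (-(n:ℝ))^j ≠ 0 := by simp [hnn]
  field_simp
  rw [neg_pow (n:ℝ) d]
  field_simp
  rw [← pow_mul, mul_comm d 2, pow_mul]
  norm_num

lemma coeff_prod_Eul (n r : ℕ) (hr : 1 ≤ r) (hrn : r ≤ n) (b : Fin r → ℕ)
    (hb : ∀ i, 0 < b i) (hsum : ∑ i, b i = n) :
    PowerSeries.coeff n ((∏ i : Fin r, Phi (b i)) * (1 - PowerSeries.X)^n)
      = if n = r then 1 else 0 := by
  have hbi : ∀ i, (b i - 1) + 1 = b i := fun i => by have := hb i; omega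
  have hPE : (∏ i : Fin r, Phi (b i)) * (1 - PowerSeries.X)^n
      = ((∏ i : Fin r, Eul (b i - 1) : Polynomial ℝ) : ℝ⟦X⟧) := by
    rw [← hsum, ← Finset.prod_pow_eq_pow_sum, ← Finset.prod_mul_distrib,
      ← Polynomial.coeToPowerSeries.ringHom_apply, map_prod]
    apply Finset.prod_congr rfl
    intro i _
    rw [Polynomial.coeToPowerSeries.ringHom_apply, ← Eul_spec (b i - 1), hbi i]
    ring
  rw [hPE, Polynomial.coeff_coe]
  by_cases hnr : n = r
  · subst hnr
    have hb1 : ∀ i, b i = 1 := by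
      by_contra hcon
      push_neg at hcon
      obtain ⟨i0, hi0⟩ := hcon
      have h2 : 2 ≤ b i0 := by have := hb i0; omega
      have : (n : ℕ) < ∑ i, b i := by
        calc n = ∑ _i : Fin n, 1 := by simp
        _ < ∑ i, b i := by
            apply Finset.sum_lt_sum
            · intro i _; exact hb i
            · exact ⟨i0, Finset.mem_univ _, by omega⟩
      omega
    have : (∏ i : Fin n, Eul (b i - 1)) = Polynomial.X ^ n := by
      calc (∏ i : Fin n, Eul (b i - 1)) = ∏ _i : Fin n, Polynomial.X := by
            apply Finset.prod_congr rfl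
            intro i _
            rw [hb1 i]
            rfl
        _ = Polynomial.X ^ n := by
            rw [Finset.prod_const, Finset.card_univ, Fintype.card_fin]
    rw [this, if_pos rfl, Polynomial.coeff_X_pow, if_pos rfl]
  · rw [if_neg hnr]
    have hrn' : r < n := lt_of_le_of_ne hrn (fun h => hnr h.symm)
    obtain ⟨i0, hi0⟩ : ∃ i0, 2 ≤ b i0 := by
      by_contra hcon
      push_neg at hcon
      have : ∑ i, b i ≤ ∑ _i : Fin r, 1 := Finset.sum_le_sum fun i _ => by
        have h1 := hb i; have h2 := hcon i; omega
      simp at this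
      omega
    apply Polynomial.coeff_eq_zero_of_natDegree_lt
    calc (∏ i : Fin r, Eul (b i - 1)).natDegree
        ≤ ∑ i, (Eul (b i - 1)).natDegree := Polynomial.natDegree_prod_le _ _
      _ < ∑ i, b i := by
          apply Finset.sum_lt_sum
          · intro i _
            calc (Eul (b i - 1)).natDegree ≤ (b i - 1) + 1 := Eul_natDegree _
              _ = b i := hbi i
          · refine ⟨i0, Finset.mem_univ _, ?_⟩
            obtain ⟨c, hc⟩ : ∃ c, b i0 - 1 = c + 1 := ⟨b i0 - 2, by omega⟩
            rw [hc]
            calc (Eul (c+1)).natDegree ≤ c + 1 := Eul_natDegree' c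
              _ < b i0 := by omega
      _ = n := hsum

theorem stmt5 (n r : ℕ) (hr : 1 ≤ r) (hrn : r ≤ n) (b : Fin r → ℕ) (hb : ∀ i, 0 < b i)
    (hsum : ∑ i, b i = n) :
    ((n.factorial : ℝ) / ∏ i, ((b i).factorial : ℝ)) *
      ∑ k ∈ (Finset.Icc r n).attach,
        ∑ a ∈ posCompositions (k : ℕ) n,
          (-1 : ℝ) ^ (n - (k : ℕ)) * ((n - (k : ℕ)).factorial : ℝ) /
              ((n.factorial : ℝ) * (n : ℝ) ^ (n - (k : ℕ)) * ∏ i, (a i : ℝ)) *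
            ((n - r).choose ((k : ℕ) - r) : ℝ) *
            ∏ j : Fin r, (a (Fin.castLE (Finset.mem_Icc.mp k.2).1 j) : ℝ) ^ (b j)
    = if n = r then 1 else 0 := by
  classical
  have hn1 : 1 ≤ n := le_trans hr hrn
  obtain ⟨m, hm⟩ : ∃ m, n - r = m := ⟨n - r, rfl⟩
  set P : ℝ⟦X⟧ := ∏ i : Fin r, Phi (b i) with hPdef
  set K : ℝ := (m.factorial:ℝ) * (-1/(n:ℝ))^m / (n.factorial:ℝ) with hK
  set v : ℝ⟦X⟧ := ∑ j ∈ Finset.range (m+1),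
      PowerSeries.C ((-(n:ℝ))^j / (j.factorial : ℝ)) * (Phi 0)^j with hv
  set f : ℕ → ℝ := fun k =>
    (-1:ℝ)^(n-k) * (((n-k).factorial : ℝ)) * (((n - r).choose (k-r) : ℝ))
        / ((n.factorial:ℝ) * (n:ℝ)^(n-k))
      * PowerSeries.coeff n (P * (Phi 0)^(k-r)) with hf
  have h1 : (∑ k ∈ (Finset.Icc r n).attach,
      ∑ a ∈ posCompositions (k : ℕ) n,
        (-1 : ℝ) ^ (n - (k : ℕ)) * ((n - (k : ℕ)).factorial : ℝ) /
            ((n.factorial : ℝ) * (n : ℝ) ^ (n - (k : ℕ)) * ∏ i, (a i : ℝ)) *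
          ((n - r).choose ((k : ℕ) - r) : ℝ) *
          ∏ j : Fin r, (a (Fin.castLE (Finset.mem_Icc.mp k.2).1 j) : ℝ) ^ (b j))
      = ∑ k ∈ Finset.Icc r n, f k := by
    rw [← Finset.sum_attach (Finset.Icc r n) f]
    apply Finset.sum_congr rfl
    intro k _
    obtain ⟨k, hk⟩ := k
    obtain ⟨h1', h2'⟩ := Finset.mem_Icc.mp hk
    obtain ⟨j, rfl⟩ : ∃ j, k = r + j := ⟨k - r, by omega⟩
    rw [hf]
    simp only
    rw [show r + j - r = j from by omega]
    have hins := inner_sum_eq n r b j ((Finset.mem_Icc.mp hk).1)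
    rw [show r + j - r = j from by omega] at hins
    exact hins
  have h2 : ∑ k ∈ Finset.Icc r n, f k = ∑ j ∈ Finset.range (m+1), f (r+j) := by
    rw [← Finset.Ico_add_one_right_eq_Icc, Finset.sum_Ico_eq_sum_range,
      show n + 1 - r = m + 1 from by omega]
  have h3 : ∀ j ∈ Finset.range (m+1), f (r+j)
      = K * (((-(n:ℝ))^j / (j.factorial : ℝ)) * PowerSeries.coeff n (P * (Phi 0)^j)) := by
    intro j hj
    have hjm : j ≤ m := by
      rw [Finset.mem_range] at hj; omega
    rw [hf]
    simp only
    rw [show r + j - r = j from by omega, show n - (r+j) = m - j from by omega, hm,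
      coef_identity n m j hn1 hjm, hK]
    ring
  have h4 : ∑ j ∈ Finset.range (m+1),
      K * (((-(n:ℝ))^j / (j.factorial : ℝ)) * PowerSeries.coeff n (P * (Phi 0)^j))
      = K * PowerSeries.coeff n (P * v) := by
    rw [← Finset.mul_sum]
    congr 1
    rw [hv, Finset.mul_sum, map_sum]
    apply Finset.sum_congr rfl
    intro j _
    rw [show P * (PowerSeries.C ((-(n:ℝ))^j / (j.factorial : ℝ)) * (Phi 0)^j)
        = PowerSeries.C ((-(n:ℝ))^j / (j.factorial : ℝ)) * (P * (Phi 0)^j) from by ring,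
      PowerSeries.coeff_C_mul]
  have hW : PowerSeries.coeff n (P * ((1 - PowerSeries.X)^n - v)) = 0 := by
    rw [PowerSeries.coeff_mul]
    apply Finset.sum_eq_zero
    intro p hp
    rw [Finset.HasAntidiagonal.mem_antidiagonal] at hp
    by_cases hc : p.2 ≤ m
    · rw [hv, trunc_exp n m hn1 p.2 hc, mul_zero]
    · have hp1 : p.1 < r := by omega
      have hdvd : (PowerSeries.X : ℝ⟦X⟧)^r ∣ P := by
        rw [hPdef]
        have : (PowerSeries.X : ℝ⟦X⟧)^r = ∏ _i : Fin r, PowerSeries.X := by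
          rw [Finset.prod_const, Finset.card_univ, Fintype.card_fin]
        rw [this]
        exact Finset.prod_dvd_prod_of_dvd _ _ (fun i _ => X_dvd_Phi (b i))
      rw [PowerSeries.X_pow_dvd_iff.mp hdvd p.1 hp1, zero_mul]
  have h5 : PowerSeries.coeff n (P * v) = if n = r then 1 else 0 := by
    have hs : PowerSeries.coeff n (P * (1 - PowerSeries.X)^n)
        = PowerSeries.coeff n (P * v)
          + PowerSeries.coeff n (P * ((1 - PowerSeries.X)^n - v)) := by
      rw [← map_add]
      congr 1
      ring
    rw [coeff_prod_Eul n r hr hrn b hb hsum, hW, add_zero] at hs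
    exact hs.symm
  rw [h1, h2, Finset.sum_congr rfl h3, h4, h5]
  by_cases hnr : n = r
  · subst hnr
    have hm0 : m = 0 := by omega
    have hb1 : ∀ i, b i = 1 := by
      by_contra hcon
      push_neg at hcon
      obtain ⟨i0, hi0⟩ := hcon
      have : (n : ℕ) < ∑ i, b i := by
        calc n = ∑ _i : Fin n, 1 := by simp
        _ < ∑ i, b i := by
            apply Finset.sum_lt_sum
            · intro i _; exact hb i
            · exact ⟨i0, Finset.mem_univ _, by have := hb i0; omega⟩
      omega
    have hbprod : (∏ i : Fin n, ((b i).factorial : ℝ)) = 1 := by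
      apply Finset.prod_eq_one
      intro i _
      rw [hb1 i]
      norm_num
    rw [if_pos rfl, hbprod, hK, hm0]
    have hnf : (n.factorial : ℝ) ≠ 0 := by positivity
    field_simp
    norm_num
  · rw [if_neg hnr, mul_zero, mul_zero]
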